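/- Lower bound on the gradient with respect to the first layer (Lemma 3.1): Let c₀ > 0 and let the weights α satisfy L ≥ max(5c₀, 4c₀²) and ‖α‖_{F,∞} ≤ c₀ L^{-1/2}. Under activation assumption (i) and data assumption (iii), ‖∇_{α_1} J_L(α)‖_F² ≥ (1/(4N)) e^{-2c₀} L^{-1} J_L(α). -/

import Mathlib

open Finset

noncomputable section

/-- Euclidean norm of a vector in `ℝ^d`. -/
def vnorm {d : ℕ} (v : Fin d → ℝ) : ℝ := Real.sqrt (∑ i, v i ^ 2)

/-- Frobenius norm of a `d × d` real matrix. -/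
def frobNorm {d : ℕ} (A : Fin d → Fin d → ℝ) : ℝ := Real.sqrt (∑ i, ∑ j, A i j ^ 2)

/-- Matrix-vector product. -/
def mulVec' {d : ℕ} (A : Fin d → Fin d → ℝ) (v : Fin d → ℝ) : Fin d → ℝ :=
  fun i => ∑ j, A i j * v j

/-- Matrix-matrix product. -/
def matMul' {d : ℕ} (A B : Fin d → Fin d → ℝ) : Fin d → Fin d → ℝ :=
  fun i j => ∑ l, A i l * B l j

/-- Hidden states of the residual network: `h_0 = x` and
`h_{k+1} = h_k + L^{-1/2} σ_d(α_{k+1} h_k)`, where the weight of the (1-based)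
layer `k+1` is stored at the (0-based) index `k`. -/
def hiddenState {d L : ℕ} (σ : ℝ → ℝ) (α : Fin L → Fin d → Fin d → ℝ) (x : Fin d → ℝ) :
    ℕ → Fin d → ℝ
  | 0 => x
  | k + 1 =>
      if h : k < L then
        fun i => hiddenState σ α x k i + (Real.sqrt L)⁻¹ * σ (mulVec' (α ⟨k, h⟩) (hiddenState σ α x k) i)
      else hiddenState σ α x k

/-- One factor `I_d + L^{-1/2} diag(σ'(α_{k+1} h_k)) α_{k+1}` of the layer-to-output
Jacobian (0-based index `k`). -/
def layerJac {d L : ℕ} (σ : ℝ → ℝ) (α : Fin L → Fin d → Fin d → ℝ) (x : Fin d → ℝ)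
    (k : ℕ) (h : k < L) : Fin d → Fin d → ℝ :=
  fun i i' => (if i = i' then (1 : ℝ) else 0) +
    (Real.sqrt L)⁻¹ * deriv σ (mulVec' (α ⟨k, h⟩) (hiddenState σ α x k) i) * α ⟨k, h⟩ i i'

/-- Layer-to-output Jacobian `M_k^x(α) = ∂h_L/∂h_k`, where `k` is the 1-based
paper index, `0 ≤ k ≤ L`. -/
def jacM {d L : ℕ} (σ : ℝ → ℝ) (α : Fin L → Fin d → Fin d → ℝ) (x : Fin d → ℝ) :
    ℕ → Fin d → Fin d → ℝ
  | k =>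
      if h : k < L then matMul' (jacM σ α x (k + 1)) (layerJac σ α x k h)
      else fun i i' => if i = i' then 1 else 0
  termination_by k => L - k
  decreasing_by omega

/-- Mean-squared training loss `J_L`. -/
def loss {d L N : ℕ} (σ : ℝ → ℝ) (x y : Fin N → Fin d → ℝ)
    (α : Fin L → Fin d → Fin d → ℝ) : ℝ :=
  (1 / (2 * N)) * ∑ i, ∑ j, (y i j - hiddenState σ α (x i) L j) ^ 2

/-- Partial derivative of the loss with respect to the `(m,n)` entry of the
`k`-th weight matrix. -/
def gradEntry {d L N : ℕ} (σ : ℝ → ℝ) (x y : Fin N → Fin d → ℝ)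
    (α : Fin L → Fin d → Fin d → ℝ) (k : Fin L) (m n : Fin d) : ℝ :=
  fderiv ℝ (loss σ x y) α (Pi.single k (Pi.single m (Pi.single n 1)))

/-- `G_k^{x,y}(α) = (M_k^x(α))ᵀ (ŷ(x,α) − y)`; `k` is the 1-based paper index. -/
def Gvec {d L : ℕ} (σ : ℝ → ℝ) (α : Fin L → Fin d → Fin d → ℝ) (x y : Fin d → ℝ)
    (k : ℕ) : Fin d → ℝ :=
  fun n => ∑ j, jacM σ α x k j n * (hiddenState σ α x L j - y j)

/-- Assumption (i) on the activation function: `σ ∈ C²`, `σ'(0) = 1`, and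
`|σ(z)| ≤ |z|`, `|σ'(z)| ≤ 1`, `|σ''(z)| ≤ 1` for all `z`. -/
def ActAssump (σ : ℝ → ℝ) : Prop :=
  ContDiff ℝ 2 σ ∧ deriv σ 0 = 1 ∧
    ∀ z : ℝ, |σ z| ≤ |z| ∧ |deriv σ z| ≤ 1 ∧ |deriv (deriv σ) z| ≤ 1


lemma exp_ub (x : ℝ) (h : |x| ≤ 1) : Real.exp x ≤ 1 + x + x^2/2 + (2/9)*|x|^3 := by
  have h2 := Real.exp_bound h (n := 3)
  simp [Finset.sum_range_succ, Nat.factorial] at h2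
  rw [abs_le] at h2
  norm_num at h2 ⊢
  nlinarith [h2.1, h2.2]

lemma one_sub_ge (t : ℝ) (h0 : 0 ≤ t) (h1 : t ≤ 1/5) : Real.exp (-(t + t^2)) ≤ 1 - t := by
  have habs : |(-(t + t^2))| ≤ 1 := by rw [abs_le]; constructor <;> nlinarith
  have h2 := exp_ub _ habs
  have habs2 : |(-(t + t^2))| = t + t^2 := by rw [abs_neg, abs_of_nonneg]; nlinarith
  rw [habs2] at h2
  have key : (t+t^2)^2/2 + (2/9)*(t+t^2)^3 ≤ t^2 := by nlinarith [sq_nonneg t, mul_nonneg h0 h0, mul_nonneg (mul_nonneg h0 h0) h0]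
  nlinarith [h2]

lemma exp2s (s : ℝ) (h0 : 0 ≤ s) (h1 : s ≤ 1/2) : Real.exp (2*s^2) ≤ 7*(1-s)^2 := by
  have habs : |(2*s^2)| ≤ 1 := by rw [abs_le]; constructor <;> nlinarith
  have h2 := exp_ub _ habs
  have habs2 : |(2*s^2)| = 2*s^2 := abs_of_nonneg (by nlinarith)
  rw [habs2] at h2
  have key : 1 + 2*s^2 + (2*s^2)^2/2 + (2/9)*(2*s^2)^3 ≤ 7*(1-s)^2 := by
    nlinarith [sq_nonneg s, mul_nonneg h0 h0, mul_nonneg (mul_nonneg h0 h0) h0,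
      mul_nonneg (mul_nonneg (mul_nonneg h0 h0) h0) h0, sq_nonneg (s^2), sq_nonneg (s^3), sq_nonneg (s*(1-s))]
  nlinarith [h2]

lemma key_ineq (L : ℕ) (hL : 1 ≤ L) (c₀ : ℝ) (hc : 0 < c₀) (hL1 : 5*c₀ ≤ (L:ℝ)) (hL2 : 4*c₀^2 ≤ (L:ℝ)) :
    Real.exp (-(2*c₀)) ≤ 7*(1-c₀*(Real.sqrt L)⁻¹)^2 * ((1-c₀/L)^(L-1))^2 := by
  have hLpos : (0:ℝ) < L := by exact_mod_cast Nat.pos_of_ne_zero (by omega)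
  have hsq : Real.sqrt L ^ 2 = L := Real.sq_sqrt (le_of_lt hLpos)
  have hsqpos : 0 < Real.sqrt L := Real.sqrt_pos.mpr hLpos
  set s := c₀ * (Real.sqrt L)⁻¹ with hs_def
  set t := c₀ / L with ht_def
  have hspos : 0 < s := by positivity
  have htpos : 0 < t := by positivity
  have h2c : 2*c₀ ≤ Real.sqrt L := by
    have := Real.sqrt_le_sqrt (show (2*c₀)^2 ≤ (L:ℝ) by nlinarith)
    rwa [Real.sqrt_sq (by positivity)] at this
  have hs2 : s ≤ 1/2 := by
    rw [hs_def, mul_inv_le_iff₀ hsqpos]; linarith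
  have ht5 : t ≤ 1/5 := by rw [ht_def, div_le_iff₀ hLpos]; linarith
  have hss : s^2 = c₀ * t := by
    rw [hs_def, ht_def, mul_pow, inv_pow, hsq]; ring
  have h1 : Real.exp (-(t+t^2)) ≤ 1 - t := one_sub_ge t (le_of_lt htpos) ht5
  have h2 : Real.exp (-((L:ℝ)*(t+t^2))) ≤ (1-t)^(L-1) := by
    have hstep : Real.exp (-((L:ℝ)*(t+t^2))) ≤ Real.exp (-(((L-1:ℕ):ℝ)*(t+t^2))) := by
      apply Real.exp_le_exp.mpr
      have hcast : ((L-1:ℕ):ℝ) ≤ (L:ℝ) := by exact_mod_cast Nat.sub_le L 1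
      nlinarith
    refine hstep.trans ?_
    rw [show (-(((L-1:ℕ):ℝ)*(t+t^2))) = ((L-1:ℕ):ℝ) * (-(t+t^2)) by ring,
      Real.exp_nat_mul]
    exact pow_le_pow_left₀ (Real.exp_nonneg _) h1 _
  have hLt : (L:ℝ) * (t + t^2) = c₀ + s^2 := by
    rw [hss, ht_def]; field_simp
  rw [hLt] at h2
  have hexp : Real.exp (-(2*c₀)) = Real.exp (2*s^2) * (Real.exp (-(c₀+s^2)))^2 := by
    rw [← Real.exp_nat_mul, ← Real.exp_add]; congr 1; push_cast; ring
  rw [hexp]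
  have e1 : Real.exp (2*s^2) ≤ 7*(1-s)^2 := exp2s s (le_of_lt hspos) hs2
  have e2 : (Real.exp (-(c₀+s^2)))^2 ≤ ((1-t)^(L-1))^2 :=
    pow_le_pow_left₀ (Real.exp_nonneg _) h2 _
  have := mul_le_mul e1 e2 (by positivity) (by positivity)
  linarith
lemma vnorm_nonneg {d : ℕ} (v : Fin d → ℝ) : 0 ≤ vnorm v := Real.sqrt_nonneg _

lemma vnorm_sq {d : ℕ} (v : Fin d → ℝ) : vnorm v ^ 2 = ∑ i, v i ^ 2 :=
  Real.sq_sqrt (by positivity)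

lemma frobNorm_nonneg {d : ℕ} (A : Fin d → Fin d → ℝ) : 0 ≤ frobNorm A := Real.sqrt_nonneg _

lemma frobNorm_sq {d : ℕ} (A : Fin d → Fin d → ℝ) : frobNorm A ^ 2 = ∑ i, ∑ j, A i j ^ 2 :=
  Real.sq_sqrt (by positivity)

lemma vnorm_cs {d : ℕ} (v w : Fin d → ℝ) : |∑ i, v i * w i| ≤ vnorm v * vnorm w := by
  have h := Finset.sum_mul_sq_le_sq_mul_sq univ v w
  have h2 : (∑ i, v i * w i)^2 ≤ (vnorm v * vnorm w)^2 := by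
    rw [mul_pow, vnorm_sq, vnorm_sq]; exact h
  have := Real.sqrt_le_sqrt h2
  rwa [Real.sqrt_sq_eq_abs, Real.sqrt_sq (mul_nonneg (vnorm_nonneg _) (vnorm_nonneg _))] at this
  
lemma vnorm_add_le {d : ℕ} (v w : Fin d → ℝ) :
    vnorm (fun i => v i + w i) ≤ vnorm v + vnorm w := by
  have hcs : ∑ i, v i * w i ≤ vnorm v * vnorm w := (le_abs_self _).trans (vnorm_cs v w)
  have h2 : vnorm (fun i => v i + w i) ^ 2 ≤ (vnorm v + vnorm w)^2 := by
    rw [vnorm_sq]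
    have : ∑ i, (v i + w i)^2 = (∑ i, v i ^2) + 2*(∑ i, v i * w i) + ∑ i, w i ^2 := by
      rw [Finset.mul_sum, ← Finset.sum_add_distrib, ← Finset.sum_add_distrib]
      apply Finset.sum_congr rfl; intros; ring
    rw [this, ← vnorm_sq v, ← vnorm_sq w]; nlinarith [hcs]
  have := Real.sqrt_le_sqrt h2
  rwa [Real.sqrt_sq (vnorm_nonneg _), Real.sqrt_sq (add_nonneg (vnorm_nonneg _) (vnorm_nonneg _))] at this

lemma vnorm_neg {d : ℕ} (v : Fin d → ℝ) : vnorm (fun i => -v i) = vnorm v := by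
  unfold vnorm; congr 1; apply Finset.sum_congr rfl; intros; ring

lemma vnorm_lower {d : ℕ} (v w : Fin d → ℝ) :
    vnorm v - vnorm w ≤ vnorm (fun i => v i + w i) := by
  have h := vnorm_add_le (fun i => v i + w i) (fun i => - w i)
  simp only [add_neg_cancel_right] at h
  rw [vnorm_neg] at h
  linarith [h]

lemma frob_mono {d : ℕ} (A B : Fin d → Fin d → ℝ) (h : ∀ i j, |A i j| ≤ |B i j|) :
    frobNorm A ≤ frobNorm B := by
  apply Real.sqrt_le_sqrt
  apply Finset.sum_le_sum; intro i _
  apply Finset.sum_le_sum; intro j _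
  rw [← sq_abs (A i j), ← sq_abs (B i j)]
  exact pow_le_pow_left₀ (abs_nonneg _) (h i j) 2

lemma frob_smul {d : ℕ} (c : ℝ) (A : Fin d → Fin d → ℝ) :
    frobNorm (fun i j => c * A i j) = |c| * frobNorm A := by
  unfold frobNorm
  rw [show ∑ i, ∑ j, (c * A i j)^2 = c^2 * ∑ i, ∑ j, A i j ^2 by
    rw [Finset.mul_sum]; apply Finset.sum_congr rfl; intros i _
    rw [Finset.mul_sum]; apply Finset.sum_congr rfl; intros; ring]
  rw [Real.sqrt_mul (by positivity), Real.sqrt_sq_eq_abs]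

/-- transpose-mulVec bound -/
lemma vnorm_tmul {d : ℕ} (B : Fin d → Fin d → ℝ) (v : Fin d → ℝ) :
    vnorm (fun n => ∑ l, B l n * v l) ≤ frobNorm B * vnorm v := by
  have h2 : vnorm (fun n => ∑ l, B l n * v l) ^2 ≤ (frobNorm B * vnorm v)^2 := by
    rw [vnorm_sq, mul_pow, frobNorm_sq, vnorm_sq]
    calc ∑ n, (∑ l, B l n * v l)^2 ≤ ∑ n, (∑ l, (B l n)^2) * (∑ l, (v l)^2) := by
          apply Finset.sum_le_sum; intro n _
          exact Finset.sum_mul_sq_le_sq_mul_sq univ _ _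
      _ = (∑ i, ∑ j, B i j ^2) * ∑ l, v l ^2 := by
          rw [← Finset.sum_mul, Finset.sum_comm]
  have := Real.sqrt_le_sqrt h2
  rwa [Real.sqrt_sq (vnorm_nonneg _), Real.sqrt_sq (mul_nonneg (frobNorm_nonneg _) (vnorm_nonneg _))] at this

/-- row bound -/
lemma row_cs {d : ℕ} (A : Fin d → Fin d → ℝ) (x : Fin d → ℝ) (m : Fin d) :
    |∑ j, A m j * x j| ≤ frobNorm A * vnorm x := by
  have h := vnorm_cs (A m) x
  refine h.trans (mul_le_mul_of_nonneg_right ?_ (vnorm_nonneg x))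
  have h2 : vnorm (A m) ^2 ≤ frobNorm A ^2 := by
    rw [vnorm_sq, frobNorm_sq]
    exact Finset.single_le_sum (f := fun i => ∑ j, A i j ^2) (fun i _ => by positivity) (mem_univ m)
  have := Real.sqrt_le_sqrt h2
  rwa [Real.sqrt_sq (vnorm_nonneg _), Real.sqrt_sq (frobNorm_nonneg _)] at this
section GvecSec
variable {d L : ℕ} (σ : ℝ → ℝ) (α : Fin L → Fin d → Fin d → ℝ) (x y : Fin d → ℝ)

lemma jacM_last : jacM σ α x L = fun i i' => if i = i' then (1:ℝ) else 0 := by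
  rw [jacM]; simp

lemma Gvec_last : Gvec σ α x y L = fun n => hiddenState σ α x L n - y n := by
  funext n
  simp [Gvec, jacM_last, ite_mul, Finset.sum_ite_eq]

lemma Gvec_rec (k : ℕ) (hk : k < L) (n : Fin d) :
    Gvec σ α x y k n = Gvec σ α x y (k+1) n +
      ∑ l, ((Real.sqrt L)⁻¹ * deriv σ (mulVec' (α ⟨k,hk⟩) (hiddenState σ α x k) l) * α ⟨k,hk⟩ l n)
        * Gvec σ α x y (k+1) l := by
  have : Gvec σ α x y k n = ∑ l, layerJac σ α x k hk l n * Gvec σ α x y (k+1) l := by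
    unfold Gvec
    rw [jacM]
    simp only [hk, dif_pos, matMul']
    calc ∑ j, (∑ l, jacM σ α x (k+1) j l * layerJac σ α x k hk l n) * (hiddenState σ α x L j - y j)
        = ∑ j, ∑ l, layerJac σ α x k hk l n * (jacM σ α x (k+1) j l * (hiddenState σ α x L j - y j)) := by
          apply Finset.sum_congr rfl; intro j _
          rw [Finset.sum_mul]; apply Finset.sum_congr rfl; intros; ring
      _ = ∑ l, ∑ j, layerJac σ α x k hk l n * (jacM σ α x (k+1) j l * (hiddenState σ α x L j - y j)) :=
          Finset.sum_comm
      _ = ∑ l, layerJac σ α x k hk l n * ∑ j, jacM σ α x (k+1) j l * (hiddenState σ α x L j - y j) := by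
          apply Finset.sum_congr rfl; intro l _; rw [Finset.mul_sum]
  rw [this]
  unfold layerJac
  rw [show ∀ f g : Fin d → ℝ, (∑ l, ((if l = n then (1:ℝ) else 0) + f l) * g l)
      = (∑ l, (if l = n then (1:ℝ) else 0) * g l) + ∑ l, f l * g l from by
    intro f g; rw [← Finset.sum_add_distrib]; apply Finset.sum_congr rfl; intros; ring]
  congr 1
  simp [ite_mul, Finset.sum_ite_eq']

lemma Gvec_lower (hL : 1 ≤ L) (hσ1 : ∀ z, |deriv σ z| ≤ 1)
    (c₀ : ℝ) (hc : 0 < c₀) (ht : c₀/(L:ℝ) ≤ 1/5)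
    (hα : ∀ k, frobNorm (α k) ≤ c₀ * (Real.sqrt L)⁻¹) :
    ∀ j, j ≤ L → (1 - c₀/(L:ℝ))^j * vnorm (fun n => hiddenState σ α x L n - y n)
      ≤ vnorm (Gvec σ α x y (L - j)) := by
  have hLpos : (0:ℝ) < L := by exact_mod_cast Nat.pos_of_ne_zero (by omega)
  have hsq : Real.sqrt L ^ 2 = (L:ℝ) := Real.sq_sqrt (le_of_lt hLpos)
  have h1t : 0 ≤ 1 - c₀/(L:ℝ) := by linarith
  intro j
  induction j with
  | zero => intro _; simp [Gvec_last]
  | succ j ih =>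
    intro hjL
    have hk : L - (j+1) < L := by omega
    have hk1 : L - (j+1) + 1 = L - j := by omega
    set k := L - (j+1) with hkdef
    have hrec := Gvec_rec σ α x y k hk
    set B : Fin d → Fin d → ℝ := fun l nn =>
      (Real.sqrt L)⁻¹ * deriv σ (mulVec' (α ⟨k,hk⟩) (hiddenState σ α x k) l) * α ⟨k,hk⟩ l nn
      with hBdef
    have hfB : frobNorm B ≤ c₀/(L:ℝ) := by
      have h1 : frobNorm B ≤ frobNorm (fun l nn => (Real.sqrt L)⁻¹ * α ⟨k,hk⟩ l nn) := by
        apply frob_mono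
        intro l nn
        rw [hBdef]
        rw [abs_mul, abs_mul, abs_mul]
        have h2 := hσ1 (mulVec' (α ⟨k,hk⟩) (hiddenState σ α x k) l)
        have h3 : (0:ℝ) ≤ |(Real.sqrt L)⁻¹| := abs_nonneg _
        have h4 : |(Real.sqrt L)⁻¹| * |deriv σ (mulVec' (α ⟨k,hk⟩) (hiddenState σ α x k) l)| * |α ⟨k,hk⟩ l nn|
            ≤ |(Real.sqrt L)⁻¹| * 1 * |α ⟨k,hk⟩ l nn| :=
          mul_le_mul_of_nonneg_right (mul_le_mul_of_nonneg_left h2 h3) (abs_nonneg _)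
        rw [mul_one] at h4; exact h4
      rw [frob_smul] at h1
      have h4 : |(Real.sqrt L)⁻¹| = (Real.sqrt L)⁻¹ := abs_of_nonneg (by positivity)
      rw [h4] at h1
      have h5 := hα ⟨k,hk⟩
      have hsp : (0:ℝ) < Real.sqrt L := Real.sqrt_pos.mpr hLpos
      calc frobNorm B ≤ (Real.sqrt L)⁻¹ * (c₀ * (Real.sqrt L)⁻¹) := by
            exact h1.trans (by apply mul_le_mul_of_nonneg_left h5 (by positivity))
        _ = c₀ / (L:ℝ) := by
            rw [div_eq_mul_inv, ← hsq]; field_simp; rw [Real.sqrt_sq hsp.le]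
    -- norm bound
    have hG : vnorm (Gvec σ α x y (k+1)) - vnorm (fun nn => ∑ l, B l nn * Gvec σ α x y (k+1) l)
        ≤ vnorm (Gvec σ α x y k) := by
      have := vnorm_lower (Gvec σ α x y (k+1)) (fun nn => ∑ l, B l nn * Gvec σ α x y (k+1) l)
      have heq : Gvec σ α x y k = fun nn => Gvec σ α x y (k+1) nn + ∑ l, B l nn * Gvec σ α x y (k+1) l := by
        funext nn; exact Gvec_rec σ α x y k hk nn
      rw [heq]; exact this
    have hBt : vnorm (fun nn => ∑ l, B l nn * Gvec σ α x y (k+1) l)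
        ≤ (c₀/(L:ℝ)) * vnorm (Gvec σ α x y (k+1)) :=
      (vnorm_tmul B _).trans (mul_le_mul_of_nonneg_right hfB (vnorm_nonneg _))
    have step : (1 - c₀/(L:ℝ)) * vnorm (Gvec σ α x y (k+1)) ≤ vnorm (Gvec σ α x y k) := by
      nlinarith [hG, hBt, vnorm_nonneg (Gvec σ α x y (k+1))]
    have ihj := ih (by omega)
    rw [← hk1] at ihj
    calc (1 - c₀/(L:ℝ))^(j+1) * vnorm (fun n => hiddenState σ α x L n - y n)
        = (1 - c₀/(L:ℝ)) * ((1 - c₀/(L:ℝ))^j * vnorm (fun n => hiddenState σ α x L n - y n)) := by ring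
      _ ≤ (1 - c₀/(L:ℝ)) * vnorm (Gvec σ α x y (k+1)) := by
          exact mul_le_mul_of_nonneg_left ihj h1t
      _ ≤ vnorm (Gvec σ α x y k) := step
end GvecSec
section CalcSec
variable {d L : ℕ} (σ : ℝ → ℝ)

/-- Directional derivative of the hidden state along direction `e` at base point `α`. -/
def dvec (α e : Fin L → Fin d → Fin d → ℝ) (x : Fin d → ℝ) : ℕ → Fin d → ℝ
  | 0 => fun _ => 0
  | k+1 =>
      if h : k < L then
        fun i => dvec α e x k i +
          (Real.sqrt L)⁻¹ * deriv σ (mulVec' (α ⟨k, h⟩) (hiddenState σ α x k) i) *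
            (mulVec' (e ⟨k, h⟩) (hiddenState σ α x k) i + mulVec' (α ⟨k, h⟩) (dvec α e x k) i)
      else dvec α e x k

variable {σ}

lemma hidden_hasDerivAt (hσd : Differentiable ℝ σ)
    (α e : Fin L → Fin d → Fin d → ℝ) (x : Fin d → ℝ) :
    ∀ k (j : Fin d), HasDerivAt (fun t : ℝ => hiddenState σ (α + t • e) x k j)
      (dvec σ α e x k j) 0 := by
  have h0e : α + (0:ℝ) • e = α := by simp
  intro k
  induction k with
  | zero =>
    intro j
    simp only [hiddenState]
    exact hasDerivAt_const 0 (x j)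
  | succ k ih =>
    intro j
    by_cases h : k < L
    · have key : (fun t : ℝ => hiddenState σ (α + t • e) x (k+1) j)
          = fun t : ℝ => hiddenState σ (α + t • e) x k j +
            (Real.sqrt L)⁻¹ * σ (∑ j', (α ⟨k, h⟩ j j' + t * e ⟨k, h⟩ j j') *
              hiddenState σ (α + t • e) x k j') := by
        funext t
        simp only [hiddenState, h, dif_pos, mulVec', Pi.add_apply, Pi.smul_apply,
          smul_eq_mul]
      rw [key]
      have hsum : HasDerivAt (fun t : ℝ => ∑ j', (α ⟨k, h⟩ j j' + t * e ⟨k, h⟩ j j') *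
            hiddenState σ (α + t • e) x k j')
          (∑ j', (e ⟨k, h⟩ j j' * hiddenState σ α x k j' +
            α ⟨k, h⟩ j j' * dvec σ α e x k j')) 0 := by
        apply HasDerivAt.fun_sum
        intro j' _
        have h1 : HasDerivAt (fun t : ℝ => α ⟨k, h⟩ j j' + t * e ⟨k, h⟩ j j')
            (e ⟨k, h⟩ j j') 0 := by
          simpa using ((hasDerivAt_id (0:ℝ)).mul_const (e ⟨k, h⟩ j j')).const_add
            (α ⟨k, h⟩ j j')
        have h2 := ih j'
        have h3 := h1.mul h2
        simp only [h0e, zero_mul, add_zero] at h3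
        exact h3
      set Z := mulVec' (α ⟨k, h⟩) (hiddenState σ α x k) j with hZ
      have hZeq : (∑ j', (α ⟨k, h⟩ j j' + (0:ℝ) * e ⟨k, h⟩ j j') *
          hiddenState σ (α + (0:ℝ) • e) x k j') = Z := by
        rw [hZ]; simp only [h0e, zero_mul, add_zero, mulVec']
      have hσZ : HasDerivAt σ (deriv σ Z)
          (∑ j', (α ⟨k, h⟩ j j' + (0:ℝ) * e ⟨k, h⟩ j j') *
            hiddenState σ (α + (0:ℝ) • e) x k j') := by
        rw [hZeq]; exact (hσd Z).hasDerivAt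
      have hcomp := HasDerivAt.comp (0:ℝ) hσZ hsum
      have hfinal := (ih j).add (hcomp.const_mul ((Real.sqrt L)⁻¹))
      refine hfinal.congr_deriv ?_
      · symm; rw [dvec]
        simp only [h, dif_pos]
        rw [show mulVec' (e ⟨k, h⟩) (hiddenState σ α x k) j +
            mulVec' (α ⟨k, h⟩) (dvec σ α e x k) j
            = ∑ j', (e ⟨k, h⟩ j j' * hiddenState σ α x k j' +
              α ⟨k, h⟩ j j' * dvec σ α e x k j') from by
          rw [mulVec', mulVec', ← Finset.sum_add_distrib]]
        ring
    · have key : (fun t : ℝ => hiddenState σ (α + t • e) x (k+1) j)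
          = fun t : ℝ => hiddenState σ (α + t • e) x k j := by
        funext t; simp only [hiddenState, h, dif_neg, not_false_iff]
      rw [key]
      have : dvec σ α e x (k+1) j = dvec σ α e x k j := by
        simp only [dvec, h, dif_neg, not_false_iff]
      rw [this]
      exact ih j

lemma hidden_diffA (hσd : Differentiable ℝ σ) (x : Fin d → ℝ) :
    ∀ k (j : Fin d), Differentiable ℝ
      (fun A : Fin L → Fin d → Fin d → ℝ => hiddenState σ A x k j) := by
  intro k
  induction k with
  | zero => intro j; simp only [hiddenState]; exact differentiable_const (x j)
  | succ k ih =>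
    intro j
    by_cases h : k < L
    · have key : (fun A : Fin L → Fin d → Fin d → ℝ => hiddenState σ A x (k+1) j)
          = fun A => hiddenState σ A x k j +
            (Real.sqrt L)⁻¹ * σ (∑ j', A ⟨k, h⟩ j j' * hiddenState σ A x k j') := by
        funext A; simp only [hiddenState, h, dif_pos, mulVec']
      rw [key]
      apply (ih j).add
      apply Differentiable.const_mul
      apply hσd.comp
      apply Differentiable.fun_sum
      intro j' _
      have heval : Differentiable ℝ (fun A : Fin L → Fin d → Fin d → ℝ => A ⟨k, h⟩ j j') := by
        fun_prop
      exact heval.mul (ih j')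
    · have key : (fun A : Fin L → Fin d → Fin d → ℝ => hiddenState σ A x (k+1) j)
          = fun A => hiddenState σ A x k j := by
        funext A; simp only [hiddenState, h, dif_neg, not_false_iff]
      rw [key]; exact ih j

lemma loss_diffA {N : ℕ} (hσd : Differentiable ℝ σ) (x y : Fin N → Fin d → ℝ) :
    Differentiable ℝ (loss (L := L) σ x y) := by
  unfold loss
  apply Differentiable.const_mul
  apply Differentiable.fun_sum; intro i _
  apply Differentiable.fun_sum; intro j _
  exact ((differentiable_const (y i j)).sub (hidden_diffA hσd (x i) L j)).pow 2

end CalcSec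

section GradFormula
variable {d L : ℕ} {σ : ℝ → ℝ}

lemma layerJac_dvec (α e : Fin L → Fin d → Fin d → ℝ) (x : Fin d → ℝ)
    (k : ℕ) (hk : k < L) (hek : e ⟨k, hk⟩ = 0) (l : Fin d) :
    ∑ m', layerJac σ α x k hk l m' * dvec σ α e x k m' = dvec σ α e x (k+1) l := by
  rw [show dvec σ α e x (k+1) = _ from by rw [dvec]]
  simp only [hk, dif_pos]
  unfold layerJac
  rw [show ∀ f g : Fin d → ℝ, (∑ m', ((if l = m' then (1:ℝ) else 0) + f m') * g m')
      = (∑ m', (if l = m' then (1:ℝ) else 0) * g m') + ∑ m', f m' * g m' from by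
    intro f g; rw [← Finset.sum_add_distrib]; apply Finset.sum_congr rfl; intros; ring]
  rw [show (∑ m', (if l = m' then (1:ℝ) else 0) * dvec σ α e x k m') = dvec σ α e x k l from by
    simp [ite_mul, Finset.sum_ite_eq]]
  rw [hek]
  simp only [mulVec', Pi.zero_apply, zero_mul, Finset.sum_const_zero, zero_add, Finset.mul_sum]
  congr 1
  apply Finset.sum_congr rfl; intros; ring

lemma dvec_jacM (h0 : 0 < L) (α e : Fin L → Fin d → Fin d → ℝ) (x : Fin d → ℝ)
    (he1 : ∀ (k : ℕ) (hk : k < L), k ≠ 0 → e ⟨k, hk⟩ = 0) :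
    ∀ i, i ≤ L - 1 → ∀ j, ∑ m', jacM σ α x (L - i) j m' * dvec σ α e x (L - i) m'
      = dvec σ α e x L j := by
  intro i
  induction i with
  | zero =>
    intro _ j
    simp only [Nat.sub_zero]
    rw [show jacM σ α x L = fun i i' => if i = i' then (1:ℝ) else 0 from by rw [jacM]; simp]
    simp [ite_mul, Finset.sum_ite_eq']
  | succ i ih =>
    intro hi j
    have hk : L - (i+1) < L := by omega
    have hk0 : L - (i+1) ≠ 0 := by omega
    have hk1 : L - (i+1) + 1 = L - i := by omega
    set k := L - (i+1) with hkdef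
    rw [show jacM σ α x k = matMul' (jacM σ α x (k+1)) (layerJac σ α x k hk) from by
      rw [jacM]; simp [hk]]
    calc ∑ m', matMul' (jacM σ α x (k+1)) (layerJac σ α x k hk) j m' * dvec σ α e x k m'
        = ∑ m', ∑ l, jacM σ α x (k+1) j l * (layerJac σ α x k hk l m' * dvec σ α e x k m') := by
          apply Finset.sum_congr rfl; intro m' _
          rw [matMul', Finset.sum_mul]
          apply Finset.sum_congr rfl; intros; ring
      _ = ∑ l, ∑ m', jacM σ α x (k+1) j l * (layerJac σ α x k hk l m' * dvec σ α e x k m') :=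
          Finset.sum_comm
      _ = ∑ l, jacM σ α x (k+1) j l * dvec σ α e x (k+1) l := by
          apply Finset.sum_congr rfl; intro l _
          rw [← Finset.mul_sum, layerJac_dvec α e x k hk (he1 k hk hk0) l]
      _ = dvec σ α e x L j := by rw [hk1]; exact ih (by omega) j

lemma dvec_one (h0 : 0 < L) (α : Fin L → Fin d → Fin d → ℝ) (x : Fin d → ℝ) (m n : Fin d)
    (i : Fin d) :
    dvec σ α (Pi.single (⟨0, h0⟩ : Fin L) (Pi.single m (Pi.single n 1))) x 1 i
      = (Real.sqrt L)⁻¹ * deriv σ (mulVec' (α ⟨0, h0⟩) x i) *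
          (if i = m then x n else 0) := by
  rw [show (1 : ℕ) = 0 + 1 from rfl, show dvec σ α _ x (0+1) = _ from by rw [dvec]]
  simp only [h0, dif_pos]
  have e0 : (Pi.single (⟨0, h0⟩ : Fin L) (Pi.single m (Pi.single n 1)) : Fin L → Fin d → Fin d → ℝ) ⟨0, h0⟩
      = Pi.single m (Pi.single n 1) := Pi.single_eq_same _ _
  have hh0 : hiddenState σ α x 0 = x := rfl
  have hdz : dvec σ α (Pi.single (⟨0, h0⟩ : Fin L) (Pi.single m (Pi.single n 1))) x 0 = fun _ => 0 := rfl
  rw [e0, hh0, hdz]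
  have hmv0 : mulVec' (α ⟨0, h0⟩) (fun _ => (0:ℝ)) i = 0 := by simp [mulVec']
  have hmve : mulVec' (Pi.single m (Pi.single n 1)) x i = if i = m then x n else 0 := by
    rcases eq_or_ne i m with h | h <;>
      simp [mulVec', h, Pi.single_apply, ite_mul, Finset.sum_ite_eq']
  rw [hmv0, hmve]
  ring

lemma gradEntry_formula {N : ℕ} (hσd : Differentiable ℝ σ) (h0 : 0 < L)
    (x y : Fin N → Fin d → ℝ) (α : Fin L → Fin d → Fin d → ℝ) (m n : Fin d) :
    gradEntry σ x y α ⟨0, h0⟩ m n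
      = (1/(N:ℝ)) * ∑ i, (Real.sqrt L)⁻¹ * deriv σ (mulVec' (α ⟨0, h0⟩) (x i) m) *
          (x i n * Gvec σ α (x i) (y i) 1 m) := by
  set e : Fin L → Fin d → Fin d → ℝ := Pi.single (⟨0, h0⟩ : Fin L) (Pi.single m (Pi.single n 1)) with he
  have h0e : α + (0:ℝ) • e = α := by simp
  have hline : HasDerivAt (fun t : ℝ => α + t • e) e 0 := by
    simpa using ((hasDerivAt_id (0:ℝ)).smul_const e).const_add α
  have hd : HasFDerivAt (loss σ x y) (fderiv ℝ (loss σ x y) α) (α + (0:ℝ) • e) := by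
    rw [h0e]; exact ((loss_diffA hσd x y) α).hasFDerivAt
  have hcomp0 := hd.comp_hasDerivAt (0:ℝ) hline
  have hcomp : HasDerivAt (fun t : ℝ => loss σ x y (α + t • e))
      ((fderiv ℝ (loss σ x y) α) e) 0 := by
    rw [Function.comp_def] at hcomp0; exact hcomp0
  have hman : HasDerivAt (fun t : ℝ => loss σ x y (α + t • e))
      ((1/(2*(N:ℝ))) * ∑ i, ∑ j, ((2:ℕ) * (y i j - hiddenState σ α (x i) L j)^1 *
        (0 - dvec σ α e (x i) L j))) 0 := by
    unfold loss
    apply HasDerivAt.const_mul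
    apply HasDerivAt.fun_sum; intro i _
    apply HasDerivAt.fun_sum; intro j _
    have hpow := ((hasDerivAt_const (0:ℝ) (y i j)).sub
      (hidden_hasDerivAt hσd α e (x i) L j)).pow 2
    convert hpow using 2 <;> first | rfl | norm_num
  have huniq : gradEntry σ x y α ⟨0, h0⟩ m n
      = (1/(2*(N:ℝ))) * ∑ i, ∑ j, ((2:ℕ) * (y i j - hiddenState σ α (x i) L j)^1 *
        (0 - dvec σ α e (x i) L j)) := by
    rw [gradEntry, ← he]
    exact hcomp.unique hman
  rw [huniq]
  have he1 : ∀ (k : ℕ) (hk : k < L), k ≠ 0 → e ⟨k, hk⟩ = 0 := by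
    intro k hk hk0
    rw [he]
    apply Pi.single_eq_of_ne
    simp [Fin.ext_iff]; omega
  have hper : ∀ i, ∑ j, ((2:ℕ) * (y i j - hiddenState σ α (x i) L j)^1 *
        (0 - dvec σ α e (x i) L j))
      = 2 * ((Real.sqrt L)⁻¹ * deriv σ (mulVec' (α ⟨0, h0⟩) (x i) m) *
          (x i n * Gvec σ α (x i) (y i) 1 m)) := by
    intro i
    have hL1 : L - (L-1) = 1 := by omega
    have hjac := dvec_jacM (σ := σ) h0 α e (x i) he1 (L-1) (le_refl _)
    rw [hL1] at hjac
    calc ∑ j, ((2:ℕ) * (y i j - hiddenState σ α (x i) L j)^1 * (0 - dvec σ α e (x i) L j))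
        = ∑ j, 2 * ((hiddenState σ α (x i) L j - y i j) * dvec σ α e (x i) L j) := by
          apply Finset.sum_congr rfl; intros; push_cast; ring
      _ = 2 * ∑ j, ((hiddenState σ α (x i) L j - y i j) * ∑ m', jacM σ α (x i) 1 j m' * dvec σ α e (x i) 1 m') := by
          rw [Finset.mul_sum]
          apply Finset.sum_congr rfl; intro j _
          rw [hjac j]
      _ = 2 * ∑ m', dvec σ α e (x i) 1 m' * ∑ j, jacM σ α (x i) 1 j m' * (hiddenState σ α (x i) L j - y i j) := by
          congr 1
          rw [show ∀ f g : Fin d → ℝ, ∀ M : Fin d → Fin d → ℝ,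
              (∑ j, f j * ∑ m', M j m' * g m') = ∑ j, ∑ m', g m' * (M j m' * f j) from by
            intro f g M; apply Finset.sum_congr rfl; intro j _
            rw [Finset.mul_sum]; apply Finset.sum_congr rfl; intros; ring]
          rw [Finset.sum_comm]
          apply Finset.sum_congr rfl; intro m' _
          rw [Finset.mul_sum]
      _ = 2 * ∑ m', dvec σ α e (x i) 1 m' * Gvec σ α (x i) (y i) 1 m' := rfl
      _ = 2 * ((Real.sqrt L)⁻¹ * deriv σ (mulVec' (α ⟨0, h0⟩) (x i) m) *
            (x i n * Gvec σ α (x i) (y i) 1 m)) := by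
          congr 1
          have hrw : ∀ f : Fin d → ℝ, (∑ m', dvec σ α e (x i) 1 m' * f m')
              = ∑ m', (if m' = m then (Real.sqrt L)⁻¹ * deriv σ (mulVec' (α ⟨0, h0⟩) (x i) m) *
                  (x i n * f m) else 0) := by
            intro f
            apply Finset.sum_congr rfl; intro m' _
            rw [he, dvec_one h0]
            rcases eq_or_ne m' m with hmm | hmm
            · subst hmm; simp; ring
            · simp [hmm]
          rw [hrw, Finset.sum_ite_eq']
          simp
  calc (1/(2*(N:ℝ))) * ∑ i, ∑ j, ((2:ℕ) * (y i j - hiddenState σ α (x i) L j)^1 *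
        (0 - dvec σ α e (x i) L j))
      = (1/(2*(N:ℝ))) * ∑ i, 2 * ((Real.sqrt L)⁻¹ * deriv σ (mulVec' (α ⟨0, h0⟩) (x i) m) *
          (x i n * Gvec σ α (x i) (y i) 1 m)) := by
        congr 1
        exact Finset.sum_congr rfl (fun i _ => hper i)
    _ = (1/(N:ℝ)) * ∑ i, (Real.sqrt L)⁻¹ * deriv σ (mulVec' (α ⟨0, h0⟩) (x i) m) *
          (x i n * Gvec σ α (x i) (y i) 1 m) := by
        rw [Finset.mul_sum, Finset.mul_sum]
        apply Finset.sum_congr rfl; intro i _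
        have h2 : (1/(2*(N:ℝ))) * 2 = 1/(N:ℝ) := by
          rw [one_div, one_div, mul_inv]
          ring
        calc (1/(2*(N:ℝ))) * (2 * ((Real.sqrt L)⁻¹ * deriv σ (mulVec' (α ⟨0, h0⟩) (x i) m) *
              (x i n * Gvec σ α (x i) (y i) 1 m)))
            = ((1/(2*(N:ℝ))) * 2) * ((Real.sqrt L)⁻¹ * deriv σ (mulVec' (α ⟨0, h0⟩) (x i) m) *
              (x i n * Gvec σ α (x i) (y i) 1 m)) := by ring
          _ = _ := by rw [h2]
end GradFormula

set_option maxHeartbeats 1000000 in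
/-- **Lower bound on the gradient with respect to the first layer (Lemma 3.1).** -/
theorem statement6 {d L N : ℕ} (hd : 1 ≤ d) (hL : 1 ≤ L) (hN : 1 ≤ N)
    {σ : ℝ → ℝ} (hσ : ActAssump σ)
    (c₀ : ℝ) (hc₀ : 0 < c₀)
    (hL1 : 5 * c₀ ≤ (L : ℝ)) (hL2 : 4 * c₀ ^ 2 ≤ (L : ℝ))
    (x y : Fin N → Fin d → ℝ)
    (hx : ∀ i, vnorm (x i) = 1) (hy : ∀ i, vnorm (y i) = 1)
    (hxx : ∀ i j, i ≠ j → |∑ v, x i v * x j v| ≤ (8 * N : ℝ)⁻¹ * Real.exp (-(4 * c₀)))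
    (α : Fin L → Fin d → Fin d → ℝ)
    (hα : ∀ k, frobNorm (α k) ≤ c₀ * (Real.sqrt L)⁻¹) :
    (1 / (4 * N)) * Real.exp (-(2 * c₀)) * (L : ℝ)⁻¹ * loss σ x y α
      ≤ ∑ m, ∑ n, gradEntry σ x y α ⟨0, by omega⟩ m n ^ 2 := by
  obtain ⟨hσ2, hσ'0, hσb⟩ := hσ
  have hσd : Differentiable ℝ σ := hσ2.differentiable (by norm_num)
  have hσdd : Differentiable ℝ (deriv σ) := by
    have h2 : ContDiff ℝ ((1:ℕ) + 1) σ := by exact_mod_cast hσ2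
    exact ((contDiff_succ_iff_deriv.mp h2).2.2).differentiable (by norm_num)
  have h0 : 0 < L := hL
  have hLpos : (0:ℝ) < L := by exact_mod_cast h0
  have hNpos : (0:ℝ) < N := by exact_mod_cast hN
  have hsq : Real.sqrt L ^ 2 = (L:ℝ) := Real.sq_sqrt (le_of_lt hLpos)
  have hsqpos : 0 < Real.sqrt L := Real.sqrt_pos.mpr hLpos
  set s := c₀ * (Real.sqrt L)⁻¹ with hs_def
  set t := c₀ / (L:ℝ) with ht_def
  have hspos : 0 < s := by positivity
  have h2c : 2*c₀ ≤ Real.sqrt L := by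
    have := Real.sqrt_le_sqrt (show (2*c₀)^2 ≤ (L:ℝ) by nlinarith)
    rwa [Real.sqrt_sq (by positivity)] at this
  have hs2 : s ≤ 1/2 := by rw [hs_def, mul_inv_le_iff₀ hsqpos]; linarith
  have ht5 : t ≤ 1/5 := by rw [ht_def, div_le_iff₀ hLpos]; linarith
  have hσ1 : ∀ z, |deriv σ z| ≤ 1 := fun z => (hσb z).2.1
  -- derivative of σ is ≥ 1 - s at small arguments
  have hderiv_lb : ∀ z : ℝ, |z| ≤ s → 1 - s ≤ deriv σ z := by
    intro z hz
    have hmvt := Convex.norm_image_sub_le_of_norm_deriv_le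
      (f := deriv σ) (fun w _ => hσdd w)
      (fun w _ => by simpa using (hσb w).2.2) (convex_univ (𝕜 := ℝ)) (Set.mem_univ 0) (Set.mem_univ z)
    rw [hσ'0] at hmvt
    simp only [Real.norm_eq_abs, one_mul, sub_zero] at hmvt
    have h1 := abs_le.mp hmvt
    linarith [h1.1]
  -- notation
  set G : Fin N → Fin d → ℝ := fun i => Gvec σ α (x i) (y i) 1 with hG_def
  set A : Fin N → Fin d → ℝ :=
    fun i => fun mm => deriv σ (mulVec' (α ⟨0, h0⟩) (x i) mm) * G i mm with hA_def
  set E : Fin N → ℝ := fun i => (vnorm (fun j => hiddenState σ α (x i) L j - y i j))^2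
    with hE_def
  have hE_eval : ∀ i, E i = (vnorm (fun j => hiddenState σ α (x i) L j - y i j))^2 :=
    fun i => rfl
  have hA_eval : ∀ i mm, A i mm = deriv σ (mulVec' (α ⟨0, h0⟩) (x i) mm) * G i mm :=
    fun i mm => rfl
  have hE_nonneg : ∀ i, 0 ≤ E i := fun i => sq_nonneg _
  -- gradient formula
  have hgrad : ∀ m n : Fin d, gradEntry σ x y α ⟨0, h0⟩ m n
      = ((1/(N:ℝ)) * (Real.sqrt L)⁻¹) * ∑ i, A i m * x i n := by
    intro m n
    rw [gradEntry_formula hσd h0 x y α m n]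
    rw [Finset.mul_sum, Finset.mul_sum]
    apply Finset.sum_congr rfl; intro i _
    rw [hA_def]; ring
  -- lower bound on the per-sample vector A i
  have hAi : ∀ i, (1-s)^2 * (((1-t)^(L-1))^2 * E i) ≤ ∑ m, A i m ^ 2 := by
    intro i
    have hGlow := Gvec_lower σ α (x i) (y i) hL hσ1 c₀ hc₀ ht5 hα (L-1) (by omega)
    rw [show L - (L-1) = 1 by omega] at hGlow
    rw [← ht_def] at hGlow
    have h1t : (0:ℝ) ≤ 1 - t := by linarith
    have hGsq : ((1-t)^(L-1))^2 * E i ≤ ∑ m, G i m ^2 := by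
      have hnn : 0 ≤ (1-t)^(L-1) * vnorm (fun j => hiddenState σ α (x i) L j - y i j) :=
        mul_nonneg (pow_nonneg h1t _) (vnorm_nonneg _)
      have hsq2 := pow_le_pow_left₀ hnn hGlow 2
      rw [mul_pow] at hsq2
      rw [← vnorm_sq (G i)]
      exact hsq2
    have hstep1 : (1-s)^2 * (((1-t)^(L-1))^2 * E i) ≤ (1-s)^2 * ∑ m, G i m ^2 := by
      nlinarith [hGsq, sq_nonneg (1-s)]
    refine hstep1.trans ?_
    rw [Finset.mul_sum]
    apply Finset.sum_le_sum
    intro m _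
    have hzb : |mulVec' (α ⟨0,h0⟩) (x i) m| ≤ s := by
      have hrow := row_cs (α ⟨0,h0⟩) (x i) m
      rw [hx i, mul_one] at hrow
      exact le_trans hrow (hα ⟨0,h0⟩)
    have hlb := hderiv_lb _ hzb
    have h1s : (0:ℝ) ≤ 1 - s := by linarith
    have hsq3 : (1-s)^2 ≤ (deriv σ (mulVec' (α ⟨0,h0⟩) (x i) m))^2 :=
      pow_le_pow_left₀ h1s hlb 2
    calc (1-s)^2 * G i m^2
        ≤ (deriv σ (mulVec' (α ⟨0,h0⟩) (x i) m))^2 * G i m ^2 :=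
          mul_le_mul_of_nonneg_right hsq3 (sq_nonneg _)
      _ = A i m ^2 := by rw [hA_eval]; ring
  -- quadratic form
  set Q : Fin N → Fin N → ℝ :=
    fun i i' => (∑ m, A i m * A i' m) * (∑ n, x i n * x i' n) with hQ_def
  set P : Fin N → ℝ := fun i => ∑ m, A i m ^2 with hP_def
  have hQ_eval : ∀ i i', Q i i' = (∑ m, A i m * A i' m) * (∑ n, x i n * x i' n) :=
    fun _ _ => rfl
  have hP_eval : ∀ i, P i = ∑ m, A i m ^2 := fun _ => rfl
  set T : ℝ := ∑ i, P i with hT_def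
  set ε : ℝ := (8*(N:ℝ))⁻¹ * Real.exp (-(4*c₀)) with hε_def
  have hεpos : 0 ≤ ε := by positivity
  have hP_nonneg : ∀ i, 0 ≤ P i := by
    intro i; rw [hP_def]; positivity
  have hexpand : ∑ m, ∑ n, (∑ i, A i m * x i n)^2 = ∑ i, ∑ i', Q i i' := by
    calc ∑ m, ∑ n, (∑ i, A i m * x i n)^2
        = ∑ m, ∑ n, ∑ i, ∑ i', (A i m * A i' m) * (x i n * x i' n) := by
          apply Finset.sum_congr rfl; intro m _
          apply Finset.sum_congr rfl; intro n _
          rw [sq, Finset.sum_mul_sum]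
          apply Finset.sum_congr rfl; intro i _
          apply Finset.sum_congr rfl; intro i' _
          ring
      _ = ∑ m, ∑ i, ∑ i', ∑ n, (A i m * A i' m) * (x i n * x i' n) := by
          apply Finset.sum_congr rfl; intro m _
          rw [Finset.sum_comm]
          apply Finset.sum_congr rfl; intro i _
          rw [Finset.sum_comm]
      _ = ∑ i, ∑ m, ∑ i', ∑ n, (A i m * A i' m) * (x i n * x i' n) := Finset.sum_comm
      _ = ∑ i, ∑ i', ∑ m, ∑ n, (A i m * A i' m) * (x i n * x i' n) := by
          apply Finset.sum_congr rfl; intro i _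
          exact Finset.sum_comm
      _ = ∑ i, ∑ i', Q i i' := by
          apply Finset.sum_congr rfl; intro i _
          apply Finset.sum_congr rfl; intro i' _
          rw [hQ_eval, Finset.sum_mul]
          apply Finset.sum_congr rfl; intro m _
          rw [Finset.mul_sum]
  have hdiag : ∀ i, Q i i = P i := by
    intro i
    have h1 : ∑ n, x i n * x i n = 1 := by
      have h2 := vnorm_sq (x i)
      rw [hx i, one_pow] at h2
      calc ∑ n, x i n * x i n = ∑ n, x i n ^2 := by
            apply Finset.sum_congr rfl; intros; ring
        _ = 1 := h2.symm
    rw [hQ_eval, hP_eval, h1, mul_one]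
    apply Finset.sum_congr rfl; intros; ring
  have hcross : ∀ i i', i ≠ i' → -(ε * ((P i + P i')/2)) ≤ Q i i' := by
    intro i i' hne
    have hc1 : |∑ m, A i m * A i' m| ≤ vnorm (A i) * vnorm (A i') := vnorm_cs _ _
    have hc2 : |∑ n, x i n * x i' n| ≤ ε := hxx i i' hne
    have habs : |Q i i'| ≤ (vnorm (A i) * vnorm (A i')) * ε := by
      rw [hQ_eval, abs_mul]
      exact mul_le_mul hc1 hc2 (abs_nonneg _) (mul_nonneg (vnorm_nonneg _) (vnorm_nonneg _))
    have hamgm : vnorm (A i) * vnorm (A i') ≤ (P i + P i')/2 := by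
      have h1 : vnorm (A i)^2 = P i := by rw [vnorm_sq, hP_eval]
      have h2 : vnorm (A i')^2 = P i' := by rw [vnorm_sq, hP_eval]
      nlinarith [sq_nonneg (vnorm (A i) - vnorm (A i'))]
    nlinarith [neg_abs_le (Q i i'), habs, hamgm, hεpos,
      mul_nonneg (vnorm_nonneg (A i)) (vnorm_nonneg (A i'))]
  have h3 : ∀ i : Fin N, ∑ i' ∈ univ.erase i, ((P i + P i')/2)
      = ((((N:ℕ)-1:ℕ):ℝ) * P i + (T - P i))/2 := by
    intro i
    rw [← Finset.sum_div, Finset.sum_add_distrib, Finset.sum_const,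
      Finset.card_erase_of_mem (mem_univ i), Finset.card_univ, Fintype.card_fin,
      Finset.sum_erase_eq_sub (mem_univ i), nsmul_eq_mul, hT_def]
  have hcast : (((N:ℕ)-1:ℕ):ℝ) = (N:ℝ)-1 := by
    rw [Nat.cast_sub hN]; norm_num
  have h4 : ∀ i : Fin N, -(ε * ((((N:ℝ)-1) * P i + (T - P i))/2)) ≤ ∑ i' ∈ univ.erase i, Q i i' := by
    intro i
    have h5 : ∑ i' ∈ univ.erase i, (-(ε * ((P i + P i')/2))) ≤ ∑ i' ∈ univ.erase i, Q i i' := by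
      apply Finset.sum_le_sum
      intro i' hi'
      exact hcross i i' (Ne.symm (Finset.ne_of_mem_erase hi'))
    calc -(ε * ((((N:ℝ)-1) * P i + (T - P i))/2))
        = -(ε * ∑ i' ∈ univ.erase i, ((P i + P i')/2)) := by rw [h3 i, hcast]
      _ = ∑ i' ∈ univ.erase i, (-(ε * ((P i + P i')/2))) := by
          rw [Finset.mul_sum]
          rw [Finset.sum_neg_distrib]
      _ ≤ ∑ i' ∈ univ.erase i, Q i i' := h5
  have hsplit : (1 - ε*((N:ℝ)-1)) * T ≤ ∑ i, ∑ i', Q i i' := by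
    have hsummand : ∀ i : Fin N, P i - ε * ((((N:ℝ)-1) * P i + (T - P i))/2)
        = (1 - ε*((N:ℝ)-1)/2 + ε/2) * P i - (ε/2)*T := by intro i; ring
    have hper : ∀ i : Fin N, P i - ε * ((((N:ℝ)-1) * P i + (T - P i))/2) ≤ ∑ i', Q i i' := by
      intro i
      rw [← Finset.add_sum_erase univ (Q i) (mem_univ i), hdiag i]
      linarith [h4 i]
    calc (1 - ε*((N:ℝ)-1)) * T
        = ∑ i : Fin N, (P i - ε * ((((N:ℝ)-1) * P i + (T - P i))/2)) := by
          rw [Finset.sum_congr rfl (fun i _ => hsummand i), Finset.sum_sub_distrib,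
            ← Finset.mul_sum, Finset.sum_const, Finset.card_univ, Fintype.card_fin,
            nsmul_eq_mul, ← hT_def]
          ring
      _ ≤ ∑ i, ∑ i', Q i i' := Finset.sum_le_sum (fun i _ => hper i)
  have hεN : ε * ((N:ℝ)-1) ≤ 1/8 := by
    have he1 : Real.exp (-(4*c₀)) ≤ 1 := Real.exp_le_one_iff.mpr (by linarith)
    rw [hε_def]
    have hN1 : (0:ℝ) ≤ (N:ℝ)-1 := by
      have : (1:ℝ) ≤ (N:ℝ) := by exact_mod_cast hN
      linarith
    have : (8*(N:ℝ))⁻¹ * Real.exp (-(4*c₀)) * ((N:ℝ)-1) ≤ (8*(N:ℝ))⁻¹ * 1 * ((N:ℝ)-1) := by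
      apply mul_le_mul_of_nonneg_right (mul_le_mul_of_nonneg_left he1 (by positivity)) hN1
    refine this.trans ?_
    rw [mul_one, inv_mul_le_iff₀ (by positivity)]
    nlinarith [hNpos]
  have hT_lb : (1-s)^2 * (((1-t)^(L-1))^2 * ∑ i, E i) ≤ T := by
    rw [hT_def]
    calc (1-s)^2 * (((1-t)^(L-1))^2 * ∑ i, E i)
        = ∑ i, (1-s)^2 * (((1-t)^(L-1))^2 * E i) := by
          rw [Finset.mul_sum, Finset.mul_sum]
      _ ≤ ∑ i, P i := Finset.sum_le_sum (fun i _ => hAi i)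
  have hT_nonneg : 0 ≤ T := by
    rw [hT_def]; exact Finset.sum_nonneg (fun i _ => hP_nonneg i)
  have hQtot : (7/8) * ((1-s)^2 * (((1-t)^(L-1))^2 * ∑ i, E i)) ≤ ∑ i, ∑ i', Q i i' := by
    have h78 : (7/8 : ℝ) ≤ 1 - ε*((N:ℝ)-1) := by linarith
    calc (7/8) * ((1-s)^2 * (((1-t)^(L-1))^2 * ∑ i, E i))
        ≤ (7/8) * T := by nlinarith [hT_lb]
      _ ≤ (1 - ε*((N:ℝ)-1)) * T := mul_le_mul_of_nonneg_right h78 hT_nonneg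
      _ ≤ ∑ i, ∑ i', Q i i' := hsplit
  -- rewrite goal
  have hS : ∑ m, ∑ n, gradEntry σ x y α ⟨0, h0⟩ m n ^2
      = ((1/(N:ℝ)) * (Real.sqrt L)⁻¹)^2 * ∑ i, ∑ i', Q i i' := by
    rw [← hexpand]
    rw [Finset.mul_sum]
    apply Finset.sum_congr rfl; intro m _
    rw [Finset.mul_sum]
    apply Finset.sum_congr rfl; intro n _
    rw [hgrad m n, mul_pow]
  have hloss : loss σ x y α = (1/(2*(N:ℝ))) * ∑ i, E i := by
    unfold loss
    congr 1
    apply Finset.sum_congr rfl; intro i _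
    rw [hE_eval, vnorm_sq]
    apply Finset.sum_congr rfl; intros; ring
  have hsumE : 0 ≤ ∑ i, E i := Finset.sum_nonneg (fun i _ => hE_nonneg i)
  have hkey := key_ineq L hL c₀ hc₀ hL1 hL2
  rw [← hs_def, ← ht_def] at hkey
  have hc2 : ((1/(N:ℝ)) * (Real.sqrt L)⁻¹)^2 = (1/(N:ℝ)^2) * (L:ℝ)⁻¹ := by
    rw [mul_pow, inv_pow, hsq]
    ring
  have hgoal : (1 / (4 * (N:ℝ))) * Real.exp (-(2 * c₀)) * (L : ℝ)⁻¹ * loss σ x y α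
      ≤ ∑ m, ∑ n, gradEntry σ x y α ⟨0, h0⟩ m n ^ 2 := by
    rw [hS, hloss, hc2]
    calc (1 / (4 * (N:ℝ))) * Real.exp (-(2 * c₀)) * (L : ℝ)⁻¹ * ((1/(2*(N:ℝ))) * ∑ i, E i)
        = (1/(N:ℝ)^2) * (L:ℝ)⁻¹ * ((1/8) * (Real.exp (-(2*c₀)) * ∑ i, E i)) := by ring
      _ ≤ (1/(N:ℝ)^2) * (L:ℝ)⁻¹ * ((1/8) * ((7*(1-s)^2 * ((1-t)^(L-1))^2) * ∑ i, E i)) := by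
          apply mul_le_mul_of_nonneg_left _ (by positivity)
          apply mul_le_mul_of_nonneg_left _ (by norm_num)
          exact mul_le_mul_of_nonneg_right hkey hsumE
      _ = (1/(N:ℝ)^2) * (L:ℝ)⁻¹ * ((7/8) * ((1-s)^2 * (((1-t)^(L-1))^2 * ∑ i, E i))) := by
          ring
      _ ≤ (1/(N:ℝ)^2) * (L:ℝ)⁻¹ * ∑ i, ∑ i', Q i i' := by
          apply mul_le_mul_of_nonneg_left hQtot (by positivity)
  exact hgoal
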